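/- Up to overall sign, there are exactly four operators of the form β = π(q₁,q₂,λ,n) J π(q₁,q₂,λ,n)* J⁻¹ that commute with the represented reduced Pati-Salam algebra ℍ_R ⊕ ℍ_L ⊕ ℂ ⊕ M_3(ℂ), commute with J, are self-adjoint, and square to one. They are given by π(η₁1₂, η₂1₂, η₃, η₄1₃)Jπ(η₁1₂, η₂1₂, η₃, η₄1₃)J⁻¹ for sign choices (η₁,η₂,η₃,η₄) equal (up to global sign) to (1,1,1,1), (1,-1,1,1), (1,1,1,-1), and (-1,1,1,-1). -/

import Mathlib

noncomputable section
open Matrix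
open scoped ComplexConjugate

abbrev M2 : Type := Matrix (Fin 2) (Fin 2) ℂ
abbrev M3 : Type := Matrix (Fin 3) (Fin 3) ℂ
abbrev M4 : Type := Matrix (Fin 4) (Fin 4) ℂ
abbrev Idx : Type := Fin 4 × Fin 2 × Fin 4
abbrev M32 : Type := Matrix Idx Idx ℂ

/-- matrix unit `e_{ij}` -/
def eu {n : ℕ} (i j : Fin n) : Matrix (Fin n) (Fin n) ℂ := Matrix.single i j 1

/-- the element `A ⊗ E ⊗ B` of `M₄(ℂ) ⊗ M₂(ℂ) ⊗ M₄(ℂ)` realized as a matrix on `ℂ⁴ ⊗ ℂ² ⊗ ℂ⁴` -/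
def tp (A : M4) (E : M2) (B : M4) : M32 :=
  Matrix.of fun p q => A p.1 q.1 * E p.2.1 q.2.1 * B p.2.2 q.2.2

/-- a 4×4 matrix assembled from four 2×2 blocks -/
def bm (a b c d : M2) : M4 :=
  Matrix.reindex finSumFinEquiv finSumFinEquiv (Matrix.fromBlocks a b c d)

/-- block-diagonal `diag(a, b)` with 2×2 blocks -/
def diag22 (a b : M2) : M4 := bm a 0 0 b

/-- block-diagonal `diag(l, n)` with a scalar and a 3×3 block -/
def diag13 (l : ℂ) (n : M3) : M4 :=
  Matrix.reindex finSumFinEquiv finSumFinEquiv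
    (Matrix.fromBlocks (Matrix.diagonal fun _ : Fin 1 => l) 0 0 n)

/-- the standard embedding of the quaternions into `M₂(ℂ)` -/
def IsQuat (q : M2) : Prop := ∃ x y : ℂ, q = !![x, y; -(conj y), conj x]

/-- the Hilbert space `ℂ⁴ ⊗ ℂ² ⊗ ℂ⁴ ≅ M₄(ℂ) ⊕ M₄(ℂ)` -/
abbrev HSp : Type := Idx → ℂ

/-- index swap underlying the real structure `J` -/
def sw (p : Idx) : Idx := (p.2.2, if p.2.1 = 0 then 1 else 0, p.1)

/-- the antilinear real structure `J[v;w] = [w*;v*]` -/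
noncomputable def Jr (ψ : HSp) : HSp := fun p => conj (ψ (sw p))

/-- action of an operator on the Hilbert space -/
def act (X : M32) (ψ : HSp) : HSp := X.mulVec ψ

/-- conjugation `X ↦ J X J⁻¹` by the real structure, at the matrix level -/
noncomputable def Jconj (X : M32) : M32 := Matrix.of fun p q => conj (X (sw p) (sw q))

/-- the opposite-algebra element `J X* J⁻¹` -/
noncomputable def opp (X : M32) : M32 := Jconj Xᴴ

/-- representation of the (unreduced) Pati–Salam algebra `ℍ_R ⊕ ℍ_L ⊕ M₄(ℂ)` -/
def piPS (q₁ q₂ : M2) (m : M4) : M32 :=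
  tp (diag22 q₁ q₂) (eu 0 0) 1 + tp m (eu 1 1) 1

/-- representation of the reduced Pati–Salam algebra `ℍ_R ⊕ ℍ_L ⊕ ℂ ⊕ M₃(ℂ)` -/
def piRed (q₁ q₂ : M2) (l : ℂ) (n : M3) : M32 := piPS q₁ q₂ (diag13 l n)

/-- the grading γ -/
def gam : M32 := tp (diag22 1 (-1)) (eu 0 0) 1 + tp 1 (eu 1 1) (diag22 (-1) 1)

/-- the grading γ⋆ -/
def gamStar : M32 :=
  tp (diag22 1 (-1)) (eu 0 0) (diag13 1 (-1)) + tp (diag13 (-1) 1) (eu 1 1) (diag22 1 (-1))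

/-- the nontrivial β for the unreduced model -/
def betaPS : M32 := tp (diag22 1 (-1)) (eu 0 0) 1 + tp 1 (eu 1 1) (diag22 1 (-1))


section Lemmas

/-- entrywise conjugate -/
def cj (M : M4) : M4 := M.map (starRingEnd ℂ)

lemma tp_apply (A : M4) (E : M2) (B : M4) (p q : Idx) :
    tp A E B p q = A p.1 q.1 * E p.2.1 q.2.1 * B p.2.2 q.2.2 := rfl

lemma tp_mul (A A' : M4) (E E' : M2) (B B' : M4) :
    tp A E B * tp A' E' B' = tp (A * A') (E * E') (B * B') := by
  ext ⟨a, j, b⟩ ⟨c, j', d⟩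
  simp only [tp_apply, Matrix.mul_apply, Fintype.sum_prod_type, Fin.sum_univ_four,
    Fin.sum_univ_two]
  ring

lemma eu00_mul_eu00 : (eu 0 0 : M2) * eu 0 0 = eu 0 0 := by
  have := Matrix.single_mul_single_same (0:Fin 2) (0:Fin 2) (0:Fin 2) (c := (1:ℂ)) 1
  simpa [eu] using this
lemma eu11_mul_eu11 : (eu 1 1 : M2) * eu 1 1 = eu 1 1 := by
  have := Matrix.single_mul_single_same (1:Fin 2) (1:Fin 2) (1:Fin 2) (c := (1:ℂ)) 1
  simpa [eu] using this
lemma eu00_mul_eu11 : (eu 0 0 : M2) * eu 1 1 = 0 :=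
  Matrix.single_mul_single_of_ne (c := (1:ℂ)) (0:Fin 2) 0 1 (by decide) 1
lemma eu11_mul_eu00 : (eu 1 1 : M2) * eu 0 0 = 0 :=
  Matrix.single_mul_single_of_ne (c := (1:ℂ)) (1:Fin 2) 1 0 (by decide) 1

lemma tp_zeroE (A B : M4) : tp A 0 B = 0 := by
  ext ⟨a, j, b⟩ ⟨c, j', d⟩; simp [tp_apply]

lemma tp_add (A A' : M4) (E : M2) (B : M4) :
    tp (A + A') E B = tp A E B + tp A' E B := by
  ext ⟨a, j, b⟩ ⟨c, j', d⟩; simp [tp_apply]; ring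

lemma tp_neg (A : M4) (E : M2) (B : M4) : tp (-A) E B = -(tp A E B) := by
  ext ⟨a, j, b⟩ ⟨c, j', d⟩; simp [tp_apply]

lemma tp_conjT (A : M4) (E : M2) (B : M4) : (tp A E B)ᴴ = tp Aᴴ Eᴴ Bᴴ := by
  ext ⟨a, j, b⟩ ⟨c, j', d⟩
  simp [tp_apply, Matrix.conjTranspose_apply]

lemma eu00_conjT : (eu 0 0 : M2)ᴴ = eu 0 0 := by
  ext i j; fin_cases i <;> fin_cases j <;>
    simp [eu, Matrix.conjTranspose_apply, Matrix.single]
lemma eu11_conjT : (eu 1 1 : M2)ᴴ = eu 1 1 := by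
  ext i j; fin_cases i <;> fin_cases j <;>
    simp [eu, Matrix.conjTranspose_apply, Matrix.single]

lemma Jconj_add (X Y : M32) : Jconj (X + Y) = Jconj X + Jconj Y := by
  ext p q; simp [Jconj]

lemma Jconj_tp00 (A B : M4) :
    Jconj (tp A (eu 0 0) B) = tp (cj B) (eu 1 1) (cj A) := by
  ext ⟨a, j, b⟩ ⟨c, j', d⟩
  fin_cases j <;> fin_cases j' <;>
    simp [Jconj, tp_apply, sw, cj, eu, Matrix.single, mul_comm]

lemma Jconj_tp11 (A B : M4) :
    Jconj (tp A (eu 1 1) B) = tp (cj B) (eu 0 0) (cj A) := by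
  ext ⟨a, j, b⟩ ⟨c, j', d⟩
  fin_cases j <;> fin_cases j' <;>
    simp [Jconj, tp_apply, sw, cj, eu, Matrix.single, mul_comm]

/-- the structural form of `β` -/
def Sb (D L : M4) : M32 := tp D (eu 0 0) Lᵀ + tp L (eu 1 1) Dᵀ

lemma one_eq_Sb : (1 : M32) = Sb 1 1 := by
  ext ⟨a, j, b⟩ ⟨c, j', d⟩
  fin_cases j <;> fin_cases j' <;>
    simp [Sb, tp_apply, eu, Matrix.single, Matrix.one_apply, Prod.ext_iff] <;>
    by_cases h1 : a = c <;> by_cases h2 : b = d <;> simp [h1, h2]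

lemma cj_one : cj 1 = 1 := by
  ext i j
  simp only [cj, Matrix.map_apply, Matrix.one_apply]
  split <;> simp

lemma opp_piRed (q₁ q₂ : M2) (l : ℂ) (n : M3) :
    opp (piRed q₁ q₂ l n) = tp 1 (eu 0 0) (diag13 l n)ᵀ + tp 1 (eu 1 1) (diag22 q₁ q₂)ᵀ := by
  have h1 : ∀ M : M4, cj Mᴴ = Mᵀ := by
    intro M; ext i j; simp [cj, Matrix.conjTranspose_apply, Matrix.transpose_apply]
  rw [opp, piRed, piPS, Matrix.conjTranspose_add, tp_conjT, tp_conjT, eu00_conjT, eu11_conjT,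
    Jconj_add, Jconj_tp00, Jconj_tp11, Matrix.conjTranspose_one, cj_one, h1, h1]
  abel

lemma beta_eq_Sb (q₁ q₂ : M2) (l : ℂ) (n : M3) :
    piRed q₁ q₂ l n * opp (piRed q₁ q₂ l n) = Sb (diag22 q₁ q₂) (diag13 l n) := by
  rw [opp_piRed, piRed, piPS, add_mul, mul_add, mul_add, tp_mul, tp_mul, tp_mul, tp_mul,
    eu00_mul_eu00, eu00_mul_eu11, eu11_mul_eu00, eu11_mul_eu11, tp_zeroE, tp_zeroE, Sb]
  simp

lemma Sb_apply0 (D L : M4) (a b c d : Fin 4) :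
    Sb D L (a, 0, b) (c, 0, d) = D a c * L d b := by
  simp [Sb, tp_apply, eu, Matrix.single]
lemma Sb_apply1 (D L : M4) (a b c d : Fin 4) :
    Sb D L (a, 1, b) (c, 1, d) = L a c * D d b := by
  simp [Sb, tp_apply, eu, Matrix.single]

lemma Sb_sq (D L : M4) : Sb D L * Sb D L = Sb (D * D) (L * L) := by
  rw [Sb, add_mul, mul_add, mul_add, tp_mul, tp_mul, tp_mul, tp_mul,
    eu00_mul_eu00, eu00_mul_eu11, eu11_mul_eu00, eu11_mul_eu11, tp_zeroE, tp_zeroE, Sb,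
    Matrix.transpose_mul, Matrix.transpose_mul]
  simp

lemma Sb_mul_piRed (D L : M4) (p₁ p₂ : M2) (μ : ℂ) (ν : M3) :
    Sb D L * piRed p₁ p₂ μ ν =
      tp (D * diag22 p₁ p₂) (eu 0 0) Lᵀ + tp (L * diag13 μ ν) (eu 1 1) Dᵀ := by
  rw [Sb, piRed, piPS, add_mul, mul_add, mul_add, tp_mul, tp_mul, tp_mul, tp_mul,
    eu00_mul_eu00, eu00_mul_eu11, eu11_mul_eu00, eu11_mul_eu11, tp_zeroE, tp_zeroE]
  simp

lemma piRed_mul_Sb (D L : M4) (p₁ p₂ : M2) (μ : ℂ) (ν : M3) :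
    piRed p₁ p₂ μ ν * Sb D L =
      tp (diag22 p₁ p₂ * D) (eu 0 0) Lᵀ + tp (diag13 μ ν * L) (eu 1 1) Dᵀ := by
  rw [Sb, piRed, piPS, add_mul, mul_add, mul_add, tp_mul, tp_mul, tp_mul, tp_mul,
    eu00_mul_eu00, eu00_mul_eu11, eu11_mul_eu00, eu11_mul_eu11, tp_zeroE, tp_zeroE]
  simp

lemma Sb_conjT (D L : M4) : (Sb D L)ᴴ = Sb Dᴴ Lᴴ := by
  rw [Sb, Matrix.conjTranspose_add, tp_conjT, tp_conjT, eu00_conjT, eu11_conjT, Sb]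
  have h : ∀ M : M4, Mᵀᴴ = Mᴴᵀ := fun M => rfl
  rw [h, h]

lemma Sb_neg (D L : M4) : -(Sb D L) = Sb (-D) L := by
  rw [Sb, Sb, tp_neg]
  have : (-D)ᵀ = -(Dᵀ) := by ext i j; simp
  rw [this]
  have : tp L (eu 1 1) (-Dᵀ) = -(tp L (eu 1 1) Dᵀ) := by
    ext ⟨a, j, b⟩ ⟨c, j', d⟩; simp [tp_apply]
  rw [this]; abel

lemma Jconj_Sb (D L : M4) : Jconj (Sb D L) = Sb Dᴴ Lᴴ := by
  rw [Sb, Jconj_add, Jconj_tp00, Jconj_tp11, Sb]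
  have h1 : ∀ M : M4, cj Mᵀ = Mᴴ := fun M => rfl
  have h2 : ∀ M : M4, cj M = Mᴴᵀ := fun M => rfl
  rw [h1, h1, h2, h2]
  abel

lemma diag22_eq (a b : M2) :
    diag22 a b = !![a 0 0, a 0 1, 0, 0; a 1 0, a 1 1, 0, 0;
                    0, 0, b 0 0, b 0 1; 0, 0, b 1 0, b 1 1] := by
  ext i j
  fin_cases i <;> fin_cases j <;>
    simp [diag22, bm, Matrix.fromBlocks, finSumFinEquiv, Fin.addCases] <;> rfl

lemma diag13_eq (l : ℂ) (n : M3) :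
    diag13 l n = !![l, 0, 0, 0; 0, n 0 0, n 0 1, n 0 2;
                    0, n 1 0, n 1 1, n 1 2; 0, n 2 0, n 2 1, n 2 2] := by
  ext i j
  fin_cases i <;> fin_cases j <;>
    simp [diag13, Matrix.fromBlocks, finSumFinEquiv, Fin.addCases, Matrix.diagonal] <;> rfl

lemma addtp_apply0 (A B C E : M4) (a b c d : Fin 4) :
    (tp A (eu 0 0) B + tp C (eu 1 1) E) (a, 0, b) (c, 0, d) = A a c * B b d := by
  simp [tp_apply, eu, Matrix.single]

lemma addtp_apply1 (A B C E : M4) (a b c d : Fin 4) :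
    (tp A (eu 0 0) B + tp C (eu 1 1) E) (a, 1, b) (c, 1, d) = C a c * E b d := by
  simp [tp_apply, eu, Matrix.single]

lemma Sb_inj {D L D' L' : M4} (h : Sb D L = Sb D' L') (a c d b : Fin 4) :
    D a c * L d b = D' a c * L' d b := by
  have := congrFun (congrFun h (a, 0, b)) (c, 0, d)
  simpa [Sb_apply0] using this

lemma Sb_ext {D L D' L' : M4} (h : ∀ a c d b, D a c * L d b = D' a c * L' d b) :
    Sb D L = Sb D' L' := by
  ext ⟨a, j, b⟩ ⟨c, j', d⟩
  fin_cases j <;> fin_cases j' <;>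
    simp [Sb, tp_apply, eu, Matrix.single]
  · exact h a c d b
  · rw [mul_comm, mul_comm (L' a c)]; exact h d b a c

lemma diag22_scalar (a b : ℂ) :
    diag22 (a • 1) (b • 1) = Matrix.diagonal ![a, a, b, b] := by
  ext i j
  fin_cases i <;> fin_cases j <;>
    simp [diag22_eq, Matrix.diagonal, Matrix.one_apply, Matrix.vecHead, Matrix.vecTail]

lemma diag13_scalar (u c : ℂ) :
    diag13 u (c • (1 : M3)) = Matrix.diagonal ![u, c, c, c] := by
  ext i j
  fin_cases i <;> fin_cases j <;>
    simp [diag13_eq, Matrix.diagonal, Matrix.one_apply, Matrix.vecHead, Matrix.vecTail]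

lemma Sb_scalar_eq (a b u c a' b' u' c' : ℂ)
    (h1 : a * u = a' * u') (h2 : a * c = a' * c')
    (h3 : b * u = b' * u') (h4 : b * c = b' * c') :
    Sb (diag22 (a • 1) (b • 1)) (diag13 u (c • (1 : M3))) =
      Sb (diag22 (a' • 1) (b' • 1)) (diag13 u' (c' • (1 : M3))) := by
  rw [diag22_scalar, diag22_scalar, diag13_scalar, diag13_scalar]
  apply Sb_ext
  intro i j k m
  rcases eq_or_ne i j with rfl | hij
  · rcases eq_or_ne k m with rfl | hkm
    · simp only [Matrix.diagonal_apply_eq]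
      fin_cases i <;> fin_cases k <;>
        simp [h1, h2, h3, h4]
    · simp [Matrix.diagonal_apply_ne _ hkm]
  · simp [Matrix.diagonal_apply_ne _ hij]

lemma diag22_mul (a b c d : M2) : diag22 a b * diag22 c d = diag22 (a * c) (b * d) := by
  ext i j
  fin_cases i <;> fin_cases j <;>
    simp [diag22_eq, Matrix.mul_apply, Fin.sum_univ_four, Fin.sum_univ_two,
      Matrix.vecHead, Matrix.vecTail]

lemma diag13_mul (l m : ℂ) (n p : M3) :
    diag13 l n * diag13 m p = diag13 (l * m) (n * p) := by
  ext i j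
  fin_cases i <;> fin_cases j <;>
    simp [diag13_eq, Matrix.mul_apply, Fin.sum_univ_four, Fin.sum_univ_three,
      Matrix.vecHead, Matrix.vecTail]

lemma diag22_one : diag22 1 1 = 1 := by
  ext i j
  fin_cases i <;> fin_cases j <;>
    simp [diag22_eq, Matrix.one_apply, Matrix.vecHead, Matrix.vecTail]

lemma diag13_one : diag13 1 1 = 1 := by
  ext i j
  fin_cases i <;> fin_cases j <;>
    simp [diag13_eq, Matrix.one_apply, Matrix.vecHead, Matrix.vecTail]

lemma diag22_conjT (a b : M2) : (diag22 a b)ᴴ = diag22 aᴴ bᴴ := by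
  ext i j
  fin_cases i <;> fin_cases j <;>
    simp [diag22_eq, Matrix.conjTranspose_apply, Matrix.vecHead, Matrix.vecTail]

lemma diag13_conjT (l : ℂ) (n : M3) : (diag13 l n)ᴴ = diag13 (conj l) nᴴ := by
  ext i j
  fin_cases i <;> fin_cases j <;>
    simp [diag13_eq, Matrix.conjTranspose_apply, Matrix.vecHead, Matrix.vecTail]

lemma IsQuat_smul_one (e : ℂ) (he : conj e = e) : IsQuat (e • 1) := by
  refine ⟨e, 0, ?_⟩
  ext i j
  fin_cases i <;> fin_cases j <;> simp [Matrix.one_apply, he]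

/-- the backward direction, for scalar sign parameters -/
lemma backward (e₁ e₂ e₃ e₄ : ℂ)
    (h₁ : e₁ = 1 ∨ e₁ = -1) (h₂ : e₂ = 1 ∨ e₂ = -1)
    (h₃ : e₃ = 1 ∨ e₃ = -1) (h₄ : e₄ = 1 ∨ e₄ = -1) :
    (∃ (q₁ q₂ : M2) (l : ℂ) (n : M3), IsQuat q₁ ∧ IsQuat q₂ ∧
        Sb (diag22 (e₁ • 1) (e₂ • 1)) (diag13 e₃ (e₄ • (1 : M3))) =
          piRed q₁ q₂ l n * opp (piRed q₁ q₂ l n)) ∧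
      (∀ (p₁ p₂ : M2) (μ : ℂ) (ν : M3), IsQuat p₁ → IsQuat p₂ →
        Sb (diag22 (e₁ • 1) (e₂ • 1)) (diag13 e₃ (e₄ • (1 : M3))) * piRed p₁ p₂ μ ν =
          piRed p₁ p₂ μ ν * Sb (diag22 (e₁ • 1) (e₂ • 1)) (diag13 e₃ (e₄ • (1 : M3)))) ∧
      Jconj (Sb (diag22 (e₁ • 1) (e₂ • 1)) (diag13 e₃ (e₄ • (1 : M3)))) =
        Sb (diag22 (e₁ • 1) (e₂ • 1)) (diag13 e₃ (e₄ • (1 : M3))) ∧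
      (Sb (diag22 (e₁ • 1) (e₂ • 1)) (diag13 e₃ (e₄ • (1 : M3))))ᴴ =
        Sb (diag22 (e₁ • 1) (e₂ • 1)) (diag13 e₃ (e₄ • (1 : M3))) ∧
      Sb (diag22 (e₁ • 1) (e₂ • 1)) (diag13 e₃ (e₄ • (1 : M3))) *
        Sb (diag22 (e₁ • 1) (e₂ • 1)) (diag13 e₃ (e₄ • (1 : M3))) = 1 := by
  have hc₁ : conj e₁ = e₁ := by rcases h₁ with rfl | rfl <;> simp
  have hc₂ : conj e₂ = e₂ := by rcases h₂ with rfl | rfl <;> simp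
  have hc₃ : conj e₃ = e₃ := by rcases h₃ with rfl | rfl <;> simp
  have hc₄ : conj e₄ = e₄ := by rcases h₄ with rfl | rfl <;> simp
  have hs₁ : e₁ * e₁ = 1 := by rcases h₁ with rfl | rfl <;> norm_num
  have hs₂ : e₂ * e₂ = 1 := by rcases h₂ with rfl | rfl <;> norm_num
  have hs₃ : e₃ * e₃ = 1 := by rcases h₃ with rfl | rfl <;> norm_num
  have hs₄ : e₄ * e₄ = 1 := by rcases h₄ with rfl | rfl <;> norm_num
  refine ⟨⟨e₁ • 1, e₂ • 1, e₃, e₄ • 1, IsQuat_smul_one _ hc₁, IsQuat_smul_one _ hc₂,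
      (beta_eq_Sb _ _ _ _).symm⟩, ?_, ?_, ?_, ?_⟩
  · intro p₁ p₂ μ ν _ _
    rw [Sb_mul_piRed, piRed_mul_Sb, diag22_mul, diag22_mul, diag13_mul, diag13_mul]
    rw [smul_one_mul, smul_one_mul, mul_smul_one, mul_smul_one,
      smul_one_mul, mul_smul_one, mul_comm e₃ μ]
  · rw [Jconj_Sb, diag22_conjT, diag13_conjT]
    simp [Matrix.conjTranspose_smul, hc₁, hc₂, hc₃, hc₄]
  · rw [Sb_conjT, diag22_conjT, diag13_conjT]
    simp [Matrix.conjTranspose_smul, hc₁, hc₂, hc₃, hc₄]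
  · rw [Sb_sq, diag22_mul, diag13_mul]
    have h22 : (e₁ • (1:M2)) * (e₁ • 1) = 1 := by
      rw [smul_mul_smul_comm, hs₁, one_mul, one_smul]
    have h22' : (e₂ • (1:M2)) * (e₂ • 1) = 1 := by
      rw [smul_mul_smul_comm, hs₂, one_mul, one_smul]
    have h33 : (e₄ • (1:M3)) * (e₄ • 1) = 1 := by
      rw [smul_mul_smul_comm, hs₄, one_mul, one_smul]
    rw [h22, h22', h33, hs₃, diag22_one, diag13_one]
    exact one_eq_Sb.symm

lemma addtp_inj0 {A B C E A' B' C' E' : M4}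
    (h : tp A (eu 0 0) B + tp C (eu 1 1) E = tp A' (eu 0 0) B' + tp C' (eu 1 1) E')
    (a c b d : Fin 4) : A a c * B b d = A' a c * B' b d := by
  have := congrFun (congrFun h (a, 0, b)) (c, 0, d)
  simpa [tp_apply, eu, Matrix.single] using this

lemma addtp_inj1 {A B C E A' B' C' E' : M4}
    (h : tp A (eu 0 0) B + tp C (eu 1 1) E = tp A' (eu 0 0) B' + tp C' (eu 1 1) E')
    (a c b d : Fin 4) : C a c * E b d = C' a c * E' b d := by
  have := congrFun (congrFun h (a, 1, b)) (c, 1, d)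
  simpa [tp_apply, eu, Matrix.single] using this

lemma forward (x₁ y₁ x₂ y₂ l : ℂ) (n : M3)
    (hcomm : ∀ (p₁ p₂ : M2) (μ : ℂ) (ν : M3), IsQuat p₁ → IsQuat p₂ →
      Sb (diag22 !![x₁, y₁; -(conj y₁), conj x₁] !![x₂, y₂; -(conj y₂), conj x₂])
          (diag13 l n) * piRed p₁ p₂ μ ν =
        piRed p₁ p₂ μ ν *
          Sb (diag22 !![x₁, y₁; -(conj y₁), conj x₁] !![x₂, y₂; -(conj y₂), conj x₂])
            (diag13 l n))
    (hsq : Sb (diag22 !![x₁, y₁; -(conj y₁), conj x₁] !![x₂, y₂; -(conj y₂), conj x₂])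
          (diag13 l n) *
        Sb (diag22 !![x₁, y₁; -(conj y₁), conj x₁] !![x₂, y₂; -(conj y₂), conj x₂])
          (diag13 l n) = 1) :
    (Sb (diag22 !![x₁, y₁; -(conj y₁), conj x₁] !![x₂, y₂; -(conj y₂), conj x₂]) (diag13 l n)
        = Sb (diag22 ((1:ℂ) • 1) ((1:ℂ) • 1)) (diag13 1 ((1:ℂ) • 1)) ∨
     Sb (diag22 !![x₁, y₁; -(conj y₁), conj x₁] !![x₂, y₂; -(conj y₂), conj x₂]) (diag13 l n)
        = Sb (diag22 ((-1:ℂ) • 1) ((-1:ℂ) • 1)) (diag13 1 ((1:ℂ) • 1)) ∨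
     Sb (diag22 !![x₁, y₁; -(conj y₁), conj x₁] !![x₂, y₂; -(conj y₂), conj x₂]) (diag13 l n)
        = Sb (diag22 ((1:ℂ) • 1) ((-1:ℂ) • 1)) (diag13 1 ((1:ℂ) • 1)) ∨
     Sb (diag22 !![x₁, y₁; -(conj y₁), conj x₁] !![x₂, y₂; -(conj y₂), conj x₂]) (diag13 l n)
        = Sb (diag22 ((-1:ℂ) • 1) ((1:ℂ) • 1)) (diag13 1 ((1:ℂ) • 1)) ∨
     Sb (diag22 !![x₁, y₁; -(conj y₁), conj x₁] !![x₂, y₂; -(conj y₂), conj x₂]) (diag13 l n)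
        = Sb (diag22 ((1:ℂ) • 1) ((1:ℂ) • 1)) (diag13 1 ((-1:ℂ) • 1)) ∨
     Sb (diag22 !![x₁, y₁; -(conj y₁), conj x₁] !![x₂, y₂; -(conj y₂), conj x₂]) (diag13 l n)
        = Sb (diag22 ((-1:ℂ) • 1) ((-1:ℂ) • 1)) (diag13 1 ((-1:ℂ) • 1)) ∨
     Sb (diag22 !![x₁, y₁; -(conj y₁), conj x₁] !![x₂, y₂; -(conj y₂), conj x₂]) (diag13 l n)
        = Sb (diag22 ((-1:ℂ) • 1) ((1:ℂ) • 1)) (diag13 1 ((-1:ℂ) • 1)) ∨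
     Sb (diag22 !![x₁, y₁; -(conj y₁), conj x₁] !![x₂, y₂; -(conj y₂), conj x₂]) (diag13 l n)
        = Sb (diag22 ((1:ℂ) • 1) ((-1:ℂ) • 1)) (diag13 1 ((-1:ℂ) • 1))) := by
  have hsqE : ∀ a c d b : Fin 4,
      (diag22 (!![x₁, y₁; -(conj y₁), conj x₁] * !![x₁, y₁; -(conj y₁), conj x₁])
        (!![x₂, y₂; -(conj y₂), conj x₂] * !![x₂, y₂; -(conj y₂), conj x₂])) a c *
        (diag13 (l * l) (n * n)) d b = (1 : M4) a c * (1 : M4) d b := by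
    have h := hsq
    rw [Sb_sq, diag22_mul, diag13_mul, one_eq_Sb] at h
    exact fun a c d b => Sb_inj h a c d b
  have E00 := hsqE 0 0 0 0
  simp [diag22_eq, diag13_eq, Matrix.mul_apply, Fin.sum_univ_two, Matrix.one_apply,
    Matrix.vecHead, Matrix.vecTail] at E00
  have hl : l ≠ 0 := by intro h0; rw [h0] at E00; simp at E00
  -- y₁ = 0
  have hA := hcomm !![Complex.I, (0:ℂ); -(conj 0), conj Complex.I]
      !![(1:ℂ), (0:ℂ); -(conj 0), conj 1] 0 0 ⟨Complex.I, 0, rfl⟩ ⟨1, 0, rfl⟩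
  rw [Sb_mul_piRed, piRed_mul_Sb, diag22_mul, diag22_mul] at hA
  have eA := addtp_inj0 hA 0 1 0 0
  simp [diag22_eq, diag13_eq, Matrix.mul_apply, Fin.sum_univ_two, Complex.conj_I,
    Matrix.vecHead, Matrix.vecTail, Matrix.transpose_apply] at eA
  have hy₁ : y₁ = 0 := by
    have h2 : Complex.I * (y₁ * l) = 0 := by linear_combination (-1/2 : ℂ) * eA
    have h3 := (mul_eq_zero.mp h2).resolve_left Complex.I_ne_zero
    exact (mul_eq_zero.mp h3).resolve_right hl
  subst hy₁
  -- y₂ = 0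
  have hA2 := hcomm !![(1:ℂ), (0:ℂ); -(conj 0), conj 1]
      !![Complex.I, (0:ℂ); -(conj 0), conj Complex.I] 0 0 ⟨1, 0, rfl⟩ ⟨Complex.I, 0, rfl⟩
  rw [Sb_mul_piRed, piRed_mul_Sb, diag22_mul, diag22_mul] at hA2
  have eA2 := addtp_inj0 hA2 2 3 0 0
  simp [diag22_eq, diag13_eq, Matrix.mul_apply, Fin.sum_univ_two, Complex.conj_I,
    Matrix.vecHead, Matrix.vecTail, Matrix.transpose_apply] at eA2
  have hy₂ : y₂ = 0 := by
    have h2 : Complex.I * (y₂ * l) = 0 := by linear_combination (-1/2 : ℂ) * eA2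
    have h3 := (mul_eq_zero.mp h2).resolve_left Complex.I_ne_zero
    exact (mul_eq_zero.mp h3).resolve_right hl
  subst hy₂
  -- x₁ real
  have hB := hcomm !![(0:ℂ), (1:ℂ); -(conj 1), conj 0]
      !![(1:ℂ), (0:ℂ); -(conj 0), conj 1] 0 0 ⟨0, 1, rfl⟩ ⟨1, 0, rfl⟩
  rw [Sb_mul_piRed, piRed_mul_Sb, diag22_mul, diag22_mul] at hB
  have eB := addtp_inj0 hB 0 1 0 0
  simp [diag22_eq, diag13_eq, Matrix.mul_apply, Fin.sum_univ_two,
    Matrix.vecHead, Matrix.vecTail, Matrix.transpose_apply] at eB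
  have hx₁ : conj x₁ = x₁ := (eB.resolve_right hl).symm
  -- x₂ real
  have hB2 := hcomm !![(1:ℂ), (0:ℂ); -(conj 0), conj 1]
      !![(0:ℂ), (1:ℂ); -(conj 1), conj 0] 0 0 ⟨1, 0, rfl⟩ ⟨0, 1, rfl⟩
  rw [Sb_mul_piRed, piRed_mul_Sb, diag22_mul, diag22_mul] at hB2
  have eB2 := addtp_inj0 hB2 2 3 0 0
  simp [diag22_eq, diag13_eq, Matrix.mul_apply, Fin.sum_univ_two,
    Matrix.vecHead, Matrix.vecTail, Matrix.transpose_apply] at eB2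
  have hx₂ : conj x₂ = x₂ := (eB2.resolve_right hl).symm
  -- x₁ ≠ 0
  have hx₁ne : x₁ ≠ 0 := by intro h0; rw [h0] at E00; simp at E00
  -- the matrix n is scalar
  have hnc : ∀ r s : Fin 3, ∀ a c : Fin 4,
      (diag13 (l*0) (n * eu r s)) a c * x₁ = (diag13 (0*l) (eu r s * n)) a c * x₁ := by
    intro r s a c
    have hN := hcomm !![(1:ℂ), (0:ℂ); -(conj 0), conj 1] !![(1:ℂ), (0:ℂ); -(conj 0), conj 1]
      0 (eu r s) ⟨1, 0, rfl⟩ ⟨1, 0, rfl⟩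
    rw [Sb_mul_piRed, piRed_mul_Sb, diag13_mul, diag13_mul] at hN
    have e := addtp_inj1 hN a c 0 0
    simpa [diag22_eq, Matrix.transpose_apply] using e
  have hkey : ∀ r s : Fin 3, ∀ a c : Fin 4,
      (diag13 (l*0) (n * eu r s)) a c = (diag13 (0*l) (eu r s * n)) a c :=
    fun r s a c => mul_right_cancel₀ hx₁ne (hnc r s a c)
  have en1 : n 0 0 = n 1 1 := by
    have := hkey 0 1 1 2
    simpa [diag13_eq, Matrix.mul_apply, Fin.sum_univ_three, eu, Matrix.single,
      Matrix.vecHead, Matrix.vecTail] using this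
  have en2 : n 1 0 = 0 := by
    have := hkey 0 1 2 2
    simpa [diag13_eq, Matrix.mul_apply, Fin.sum_univ_three, eu, Matrix.single,
      Matrix.vecHead, Matrix.vecTail] using this
  have en3 : n 2 0 = 0 := by
    have := hkey 0 1 3 2
    simpa [diag13_eq, Matrix.mul_apply, Fin.sum_univ_three, eu, Matrix.single,
      Matrix.vecHead, Matrix.vecTail] using this
  have en4 : n 1 2 = 0 := by
    have := hkey 0 1 1 3
    simpa [diag13_eq, Matrix.mul_apply, Fin.sum_univ_three, eu, Matrix.single,
      Matrix.vecHead, Matrix.vecTail] using this.symm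
  have en5 : n 0 0 = n 2 2 := by
    have := hkey 0 2 1 3
    simpa [diag13_eq, Matrix.mul_apply, Fin.sum_univ_three, eu, Matrix.single,
      Matrix.vecHead, Matrix.vecTail] using this
  have en6 : n 2 1 = 0 := by
    have := hkey 0 2 1 2
    simpa [diag13_eq, Matrix.mul_apply, Fin.sum_univ_three, eu, Matrix.single,
      Matrix.vecHead, Matrix.vecTail] using this.symm
  have en7 : n 0 1 = 0 := by
    have := hkey 1 0 1 1
    simpa [diag13_eq, Matrix.mul_apply, Fin.sum_univ_three, eu, Matrix.single,
      Matrix.vecHead, Matrix.vecTail] using this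
  have en8 : n 0 2 = 0 := by
    have := hkey 2 0 1 1
    simpa [diag13_eq, Matrix.mul_apply, Fin.sum_univ_three, eu, Matrix.single,
      Matrix.vecHead, Matrix.vecTail] using this
  have hn : n = (n 0 0) • (1 : M3) := by
    ext i j
    fin_cases i <;> fin_cases j <;>
      simp [en1, en2, en3, en4, ← en5, en6, en7, en8, Matrix.one_apply]
  have hq1eq : !![x₁, (0:ℂ); -(conj 0), conj x₁] = x₁ • (1 : M2) := by
    ext i j; fin_cases i <;> fin_cases j <;> simp [hx₁, Matrix.one_apply]
  have hq2eq : !![x₂, (0:ℂ); -(conj 0), conj x₂] = x₂ • (1 : M2) := by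
    ext i j; fin_cases i <;> fin_cases j <;> simp [hx₂, Matrix.one_apply]
  have hform : Sb (diag22 !![x₁, (0:ℂ); -(conj 0), conj x₁] !![x₂, (0:ℂ); -(conj 0), conj x₂])
      (diag13 l n) = Sb (diag22 (x₁ • 1) (x₂ • 1)) (diag13 l ((n 0 0) • 1)) := by
    rw [hq1eq, hq2eq]; conv_lhs => rw [hn]
  -- squared equations
  have E01 := hsqE 0 0 1 1
  simp [diag22_eq, diag13_eq, Matrix.mul_apply, Fin.sum_univ_two, Fin.sum_univ_three,
    Matrix.one_apply, Matrix.vecHead, Matrix.vecTail, en2, en3, en7, en8] at E01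
  have E20 := hsqE 2 2 0 0
  simp [diag22_eq, diag13_eq, Matrix.mul_apply, Fin.sum_univ_two, Matrix.one_apply,
    Matrix.vecHead, Matrix.vecTail] at E20
  have hs1 : (x₁ * l) * (x₁ * l) = 1 := by linear_combination E00
  have hs2 : (x₁ * n 0 0) * (x₁ * n 0 0) = 1 := by linear_combination E01
  have hs3 : (x₂ * l) * (x₂ * l) = 1 := by linear_combination E20
  have t1 := mul_self_eq_one_iff.mp hs1
  have t2 := mul_self_eq_one_iff.mp hs2
  have t3 := mul_self_eq_one_iff.mp hs3
  have relc : (x₁ * l) * (x₂ * n 0 0) = (x₁ * n 0 0) * (x₂ * l) := by ring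
  rcases t1 with c1 | c1 <;> rcases t2 with c2 | c2 <;> rcases t3 with c3 | c3 <;>
    rw [c1, c2, c3] at relc
  -- (1,1,1) → d1
  · refine Or.inl (hform.trans (Sb_scalar_eq x₁ x₂ l (n 0 0) 1 1 1 1
      (by rw [c1]; norm_num) (by rw [c2]; norm_num) (by rw [c3]; norm_num) ?_))
    have c4 : x₂ * n 0 0 = 1 := by linear_combination relc
    rw [c4]; norm_num
  -- (1,1,-1) → d3
  · refine Or.inr (Or.inr (Or.inl (hform.trans (Sb_scalar_eq x₁ x₂ l (n 0 0) 1 (-1) 1 1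
      (by rw [c1]; norm_num) (by rw [c2]; norm_num) (by rw [c3]; norm_num) ?_))))
    have c4 : x₂ * n 0 0 = -1 := by linear_combination relc
    rw [c4]; norm_num
  -- (1,-1,1) → d5
  · refine Or.inr (Or.inr (Or.inr (Or.inr (Or.inl (hform.trans
      (Sb_scalar_eq x₁ x₂ l (n 0 0) 1 1 1 (-1)
      (by rw [c1]; norm_num) (by rw [c2]; norm_num) (by rw [c3]; norm_num) ?_))))))
    have c4 : x₂ * n 0 0 = -1 := by linear_combination relc
    rw [c4]; norm_num
  -- (1,-1,-1) → d8
  · refine Or.inr (Or.inr (Or.inr (Or.inr (Or.inr (Or.inr (Or.inr (hform.trans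
      (Sb_scalar_eq x₁ x₂ l (n 0 0) 1 (-1) 1 (-1)
      (by rw [c1]; norm_num) (by rw [c2]; norm_num) (by rw [c3]; norm_num) ?_))))))))
    have c4 : x₂ * n 0 0 = 1 := by linear_combination relc
    rw [c4]; norm_num
  -- (-1,1,1) → d7
  · refine Or.inr (Or.inr (Or.inr (Or.inr (Or.inr (Or.inr (Or.inl (hform.trans
      (Sb_scalar_eq x₁ x₂ l (n 0 0) (-1) 1 1 (-1)
      (by rw [c1]; norm_num) (by rw [c2]; norm_num) (by rw [c3]; norm_num) ?_))))))))
    have c4 : x₂ * n 0 0 = -1 := by linear_combination -relc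
    rw [c4]; norm_num
  -- (-1,1,-1) → d6
  · refine Or.inr (Or.inr (Or.inr (Or.inr (Or.inr (Or.inl (hform.trans
      (Sb_scalar_eq x₁ x₂ l (n 0 0) (-1) (-1) 1 (-1)
      (by rw [c1]; norm_num) (by rw [c2]; norm_num) (by rw [c3]; norm_num) ?_)))))))
    have c4 : x₂ * n 0 0 = 1 := by linear_combination -relc
    rw [c4]; norm_num
  -- (-1,-1,1) → d4
  · refine Or.inr (Or.inr (Or.inr (Or.inl (hform.trans
      (Sb_scalar_eq x₁ x₂ l (n 0 0) (-1) 1 1 1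
      (by rw [c1]; norm_num) (by rw [c2]; norm_num) (by rw [c3]; norm_num) ?_)))))
    have c4 : x₂ * n 0 0 = 1 := by linear_combination -relc
    rw [c4]; norm_num
  -- (-1,-1,-1) → d2
  · refine Or.inr (Or.inl (hform.trans
      (Sb_scalar_eq x₁ x₂ l (n 0 0) (-1) (-1) 1 1
      (by rw [c1]; norm_num) (by rw [c2]; norm_num) (by rw [c3]; norm_num) ?_)))
    have c4 : x₂ * n 0 0 = -1 := by linear_combination -relc
    rw [c4]; norm_num

lemma diag22_neg (a b : M2) : -(diag22 a b) = diag22 (-a) (-b) := by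
  ext i j
  fin_cases i <;> fin_cases j <;>
    simp [diag22_eq, Matrix.vecHead, Matrix.vecTail]

end Lemmas

/-- Up to overall sign there are exactly four operators of the form
`β = π(q₁,q₂,λ,n) J π(q₁,q₂,λ,n)* J⁻¹` commuting with the represented reduced
Pati–Salam algebra and with `J`, self-adjoint and squaring to `1`; they are given
by the sign tuples `(1,1,1,1)`, `(1,-1,1,1)`, `(1,1,1,-1)` and `(-1,1,1,-1)`. -/
theorem beta_reduced_classification :
    (∀ β : M32,
      ((∃ (q₁ q₂ : M2) (l : ℂ) (n : M3), IsQuat q₁ ∧ IsQuat q₂ ∧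
          β = piRed q₁ q₂ l n * opp (piRed q₁ q₂ l n)) ∧
        (∀ (p₁ p₂ : M2) (μ : ℂ) (ν : M3), IsQuat p₁ → IsQuat p₂ →
          β * piRed p₁ p₂ μ ν = piRed p₁ p₂ μ ν * β) ∧
        Jconj β = β ∧ βᴴ = β ∧ β * β = 1) ↔
      (β = piRed 1 1 1 1 * opp (piRed 1 1 1 1) ∨
       β = -(piRed 1 1 1 1 * opp (piRed 1 1 1 1)) ∨
       β = piRed 1 (-1) 1 1 * opp (piRed 1 (-1) 1 1) ∨
       β = -(piRed 1 (-1) 1 1 * opp (piRed 1 (-1) 1 1)) ∨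
       β = piRed 1 1 1 (-1) * opp (piRed 1 1 1 (-1)) ∨
       β = -(piRed 1 1 1 (-1) * opp (piRed 1 1 1 (-1))) ∨
       β = piRed (-1) 1 1 (-1) * opp (piRed (-1) 1 1 (-1)) ∨
       β = -(piRed (-1) 1 1 (-1) * opp (piRed (-1) 1 1 (-1))))) ∧
    List.Nodup
      [piRed 1 1 1 1 * opp (piRed 1 1 1 1),
       piRed 1 (-1) 1 1 * opp (piRed 1 (-1) 1 1),
       piRed 1 1 1 (-1) * opp (piRed 1 1 1 (-1)),
       piRed (-1) 1 1 (-1) * opp (piRed (-1) 1 1 (-1)),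
       -(piRed 1 1 1 1 * opp (piRed 1 1 1 1)),
       -(piRed 1 (-1) 1 1 * opp (piRed 1 (-1) 1 1)),
       -(piRed 1 1 1 (-1) * opp (piRed 1 1 1 (-1))),
       -(piRed (-1) 1 1 (-1) * opp (piRed (-1) 1 1 (-1)))] := by
  constructor
  · intro β
    constructor
    · rintro ⟨⟨q₁, q₂, l, n, ⟨x₁, y₁, rfl⟩, ⟨x₂, y₂, rfl⟩, hβ⟩, hcomm, hJ, hherm, hsq⟩
      rw [beta_eq_Sb] at hβ
      subst hβ
      have h8 := forward x₁ y₁ x₂ y₂ l n hcomm hsq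
      simp only [neg_smul, one_smul] at h8
      simp only [beta_eq_Sb, Sb_neg, diag22_neg, neg_neg]
      exact h8
    · intro h8
      rcases h8 with h | h | h | h | h | h | h | h <;> subst h
      · have hb := backward 1 1 1 1 (Or.inl rfl) (Or.inl rfl) (Or.inl rfl) (Or.inl rfl)
        simp only [one_smul] at hb
        rw [show piRed 1 1 1 1 * opp (piRed 1 1 1 1) = Sb (diag22 1 1) (diag13 1 1) from
          beta_eq_Sb 1 1 1 1]
        exact hb
      · have hb := backward (-1) (-1) 1 1 (Or.inr rfl) (Or.inr rfl) (Or.inl rfl) (Or.inl rfl)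
        simp only [neg_smul, one_smul] at hb
        rw [show -(piRed 1 1 1 1 * opp (piRed 1 1 1 1)) =
            Sb (diag22 (-1) (-1)) (diag13 1 1) by
          rw [beta_eq_Sb, Sb_neg, diag22_neg]]
        exact hb
      · have hb := backward 1 (-1) 1 1 (Or.inl rfl) (Or.inr rfl) (Or.inl rfl) (Or.inl rfl)
        simp only [neg_smul, one_smul] at hb
        rw [show piRed 1 (-1) 1 1 * opp (piRed 1 (-1) 1 1) =
            Sb (diag22 1 (-1)) (diag13 1 1) from beta_eq_Sb 1 (-1) 1 1]
        exact hb
      · have hb := backward (-1) 1 1 1 (Or.inr rfl) (Or.inl rfl) (Or.inl rfl) (Or.inl rfl)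
        simp only [neg_smul, one_smul] at hb
        rw [show -(piRed 1 (-1) 1 1 * opp (piRed 1 (-1) 1 1)) =
            Sb (diag22 (-1) 1) (diag13 1 1) by
          rw [beta_eq_Sb, Sb_neg, diag22_neg, neg_neg]]
        exact hb
      · have hb := backward 1 1 1 (-1) (Or.inl rfl) (Or.inl rfl) (Or.inl rfl) (Or.inr rfl)
        simp only [neg_smul, one_smul] at hb
        rw [show piRed 1 1 1 (-1) * opp (piRed 1 1 1 (-1)) =
            Sb (diag22 1 1) (diag13 1 (-1)) from beta_eq_Sb 1 1 1 (-1)]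
        exact hb
      · have hb := backward (-1) (-1) 1 (-1) (Or.inr rfl) (Or.inr rfl) (Or.inl rfl)
          (Or.inr rfl)
        simp only [neg_smul, one_smul] at hb
        rw [show -(piRed 1 1 1 (-1) * opp (piRed 1 1 1 (-1))) =
            Sb (diag22 (-1) (-1)) (diag13 1 (-1)) by
          rw [beta_eq_Sb, Sb_neg, diag22_neg]]
        exact hb
      · have hb := backward (-1) 1 1 (-1) (Or.inr rfl) (Or.inl rfl) (Or.inl rfl) (Or.inr rfl)
        simp only [neg_smul, one_smul] at hb
        rw [show piRed (-1) 1 1 (-1) * opp (piRed (-1) 1 1 (-1)) =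
            Sb (diag22 (-1) 1) (diag13 1 (-1)) from beta_eq_Sb (-1) 1 1 (-1)]
        exact hb
      · have hb := backward 1 (-1) 1 (-1) (Or.inl rfl) (Or.inr rfl) (Or.inl rfl) (Or.inr rfl)
        simp only [neg_smul, one_smul] at hb
        rw [show -(piRed (-1) 1 1 (-1) * opp (piRed (-1) 1 1 (-1))) =
            Sb (diag22 1 (-1)) (diag13 1 (-1)) by
          rw [beta_eq_Sb, Sb_neg, diag22_neg, neg_neg]]
        exact hb
  · refine List.Nodup.of_map
      (fun M : M32 => (M (0, 0, 0) (0, 0, 0), M (0, 0, 1) (0, 0, 1), M (2, 0, 0) (2, 0, 0)))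
      ?_
    simp only [List.map, beta_eq_Sb, Matrix.neg_apply, Sb_apply0]
    norm_num [diag22_eq, diag13_eq, Matrix.vecHead, Matrix.vecTail,
      List.nodup_cons, List.mem_cons, Prod.ext_iff, Matrix.cons_val]
    all_goals norm_num [Matrix.cons_val_succ', Matrix.cons_val_zero, Matrix.cons_val_two, Matrix.cons_val_one]
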